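/- For any twice differentiable g : [0,1] → [0,1] with g(0) = 0 and g(1) = 1, and positive density f on (0,1) with ∫₀¹ dw/(f(w)w(1−w)) < ∞, one has ∫₀¹ f(w)·w·(1−w)·(G'(w))² dw ≥ π²·[∫₀¹ dw/(f(w)w(1−w))]⁻¹, where G(w) = arccos(1 − 2g(w)); equality holds iff g = g_opt as given by g_opt(w) = (1/2)[1 − cos(π·F(w)/F(1))] with F(w) = ∫₀^w dv/(f(v)v(1−v)). -/

import Mathlib

open Real MeasureTheory intervalIntegral Topology
open scoped ENNReal

lemma aux_slope (g g1 : ℝ → ℝ) (M : ℝ) (hM : 0 ≤ M)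
    (hd : ∀ s ∈ Set.Ioo (0:ℝ) 1, HasDerivAt g (g1 s) s)
    (hgc : ContinuousOn g (Set.Icc 0 1))
    (hlip : ∀ s ∈ Set.Icc (0:ℝ) 1, ∀ t ∈ Set.Icc (0:ℝ) 1, |g1 s - g1 t| ≤ M * |s - t|)
    (hnn : ∀ x ∈ Set.Icc (0:ℝ) 1, 0 ≤ g x)
    {w t : ℝ} (hw : w ∈ Set.Ioo (0:ℝ) 1) (ht0 : 0 < t) (htw : t ≤ w) (ht1 : t ≤ 1 - w) :
    |g1 w| ≤ g w / t + M * t := by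
  obtain ⟨hw0, hw1⟩ := hw
  have hwmem : w ∈ Set.Icc (0:ℝ) 1 := ⟨hw0.le, hw1.le⟩
  rw [abs_le]
  constructor
  · -- lower bound, via [w, w+t]
    obtain ⟨ξ, hξ, hslope⟩ := exists_hasDerivAt_eq_slope g g1 (show w < w + t by linarith)
      (hgc.mono (Set.Icc_subset_Icc (by linarith) (by linarith)))
      (fun x hx => hd x ⟨by linarith [hx.1], by linarith [hx.2]⟩)
    have hξmem : ξ ∈ Set.Icc (0:ℝ) 1 := ⟨by linarith [hξ.1], by linarith [hξ.2]⟩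
    have hgξ : -(g w / t) ≤ g1 ξ := by
      rw [hslope, show w + t - w = t by ring]
      have h1 : 0 ≤ g (w + t) := hnn _ ⟨by linarith, by linarith⟩
      rw [neg_le, ← neg_div]
      exact div_le_div_of_nonneg_right (by linarith) ht0.le |>.trans_eq rfl
    have hl := hlip w hwmem ξ hξmem
    have habs : |w - ξ| ≤ t := by
      rw [abs_le]; constructor <;> [linarith [hξ.2]; linarith [hξ.1]]
    have h2 : |g1 w - g1 ξ| ≤ M * t := hl.trans (by nlinarith [abs_nonneg (w - ξ)])
    have h3 := abs_le.mp h2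
    linarith [h3.1]
  · -- upper bound, via [w-t, w]
    obtain ⟨ξ, hξ, hslope⟩ := exists_hasDerivAt_eq_slope g g1 (show w - t < w by linarith)
      (hgc.mono (Set.Icc_subset_Icc (by linarith) (by linarith)))
      (fun x hx => hd x ⟨by linarith [hx.1], by linarith [hx.2]⟩)
    have hξmem : ξ ∈ Set.Icc (0:ℝ) 1 := ⟨by linarith [hξ.1], by linarith [hξ.2]⟩
    have hgξ : g1 ξ ≤ g w / t := by
      rw [hslope, show w - (w - t) = t by ring]
      have h1 : 0 ≤ g (w - t) := hnn _ ⟨by linarith, by linarith⟩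
      exact div_le_div_of_nonneg_right (by linarith) ht0.le |>.trans_eq rfl
    have hl := hlip w hwmem ξ hξmem
    have habs : |w - ξ| ≤ t := by
      rw [abs_le]; constructor <;> [linarith [hξ.2]; linarith [hξ.1]]
    have h2 : |g1 w - g1 ξ| ≤ M * t := hl.trans (by nlinarith [abs_nonneg (w - ξ)])
    have h3 := abs_le.mp h2
    linarith [h3.2]

lemma aux_opt {y u M d : ℝ} (hM : 0 < M) (hu : 0 ≤ u) (hd : 0 < d)
    (h : ∀ t, 0 < t → t ≤ d → |y| ≤ u / t + M * t) :
    y ^ 2 ≤ 8 * M * u + 8 * u ^ 2 / d ^ 2 := by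
  have hs : 0 ≤ Real.sqrt (M * u) := Real.sqrt_nonneg _
  have key : |y| ≤ 2 * Real.sqrt (M * u) + 2 * u / d := by
    by_contra hc
    push_neg at hc
    have hy0 : 0 < |y| := lt_of_le_of_lt (by positivity) hc
    set t := min d (|y| / (2 * M)) with htdef
    have ht0 : 0 < t := lt_min hd (by positivity)
    have htd : t ≤ d := min_le_left _ _
    have hb := h t ht0 htd
    have hMt : M * t ≤ |y| / 2 := by
      have : t ≤ |y| / (2 * M) := min_le_right _ _
      calc M * t ≤ M * (|y| / (2 * M)) := by nlinarith
        _ = |y| / 2 := by field_simp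
    have hut : |y| / 2 ≤ u / t := by linarith
    have htu : t * |y| ≤ 2 * u := by
      rw [div_le_div_iff₀ (by norm_num) ht0] at hut
      linarith
    rcases min_cases d (|y| / (2 * M)) with ⟨he, _⟩ | ⟨he, hle⟩
    · -- t = d
      have : d * |y| ≤ 2 * u := by rwa [← he, ← htdef]
      have h1 : |y| ≤ 2 * u / d := by
        rw [le_div_iff₀ hd]; linarith [mul_comm d |y|]
      linarith
    · -- t = |y|/(2M)
      have h4 : |y| / (2 * M) * |y| ≤ 2 * u := by rwa [← he, ← htdef]
      have h2M : 0 < 2 * M := by positivity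
      have h5 : |y| * |y| ≤ 2 * u * (2 * M) := by
        rw [div_mul_eq_mul_div, div_le_iff₀ h2M] at h4; linarith
      have hysq : |y| ^ 2 ≤ 4 * (M * u) := by nlinarith
      have h6 : |y| ≤ 2 * Real.sqrt (M * u) := by
        have h7 := Real.sqrt_le_sqrt hysq
        rw [Real.sqrt_sq (abs_nonneg y)] at h7
        have h8 : Real.sqrt (4 * (M * u)) = 2 * Real.sqrt (M * u) := by
          rw [show (4:ℝ) = 2 ^ 2 by norm_num, Real.sqrt_mul (by positivity),
            Real.sqrt_sq (by norm_num : (0:ℝ) ≤ 2)]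
        linarith [h7.trans_eq h8]
      have hb0 : (0:ℝ) ≤ 2 * u / d := by positivity
      linarith
  have hsq : Real.sqrt (M * u) ^ 2 = M * u := Real.sq_sqrt (by positivity)
  have hb : (0:ℝ) ≤ 2 * u / d := by positivity
  have k1 : y ^ 2 ≤ (2 * Real.sqrt (M * u) + 2 * u / d) ^ 2 := by
    rw [← sq_abs y]
    exact pow_le_pow_left₀ (abs_nonneg y) key 2
  have k2 : (2 * u / d) ^ 2 = 4 * (u ^ 2 / d ^ 2) := by rw [mul_div_assoc, mul_pow, div_pow]; norm_num
  have main : y ^ 2 ≤ 8 * (Real.sqrt (M * u)) ^ 2 + 2 * (2 * u / d) ^ 2 := by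
    nlinarith [sq_nonneg (2 * Real.sqrt (M * u) - 2 * u / d), k1]
  rw [hsq, k2] at main
  rw [show 8 * M * u + 8 * u ^ 2 / d ^ 2 = 8 * (M * u) + 2 * (4 * (u ^ 2 / d ^ 2)) by ring]
  exact main

-- u²/d² * d ≤ L * u  when  u ≤ L * d
private lemma div_helper1 {u d L : ℝ} (hd : 0 < d) (hu : 0 ≤ u) (h : u ≤ L * d) :
    u ^ 2 / d ^ 2 * d ≤ L * u := by
  rw [div_mul_eq_mul_div, div_le_iff₀ (by positivity)]
  nlinarith [mul_le_mul_of_nonneg_right h (mul_nonneg hu hd.le)]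

-- u²/d² * d ≤ L * u  when  u ≤ 1/2 and 1/(2L) ≤ d
private lemma div_helper2 {u d L : ℝ} (hd : 0 < d) (hu : 0 ≤ u) (hu12 : u ≤ 1/2)
    (hL : 1 ≤ L) (hdL : 1/(2*L) ≤ d) : u ^ 2 / d ^ 2 * d ≤ L * u := by
  rw [div_mul_eq_mul_div, div_le_iff₀ (by positivity)]
  have hL0 : (0:ℝ) < L := by linarith
  have hLud : 0 ≤ L * u * d := by positivity
  have h2 : L * u * d * (1/(2*L)) ≤ L * u * d * d := mul_le_mul_of_nonneg_left hdL hLud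
  have h3 : L * u * d * (1/(2*L)) = u * d / 2 := by field_simp
  have h4 : u * (u * d) ≤ (1/2) * (u * d) :=
    mul_le_mul_of_nonneg_right hu12 (mul_nonneg hu hd.le)
  nlinarith

-- single case: d*(1-?) bound.  From y² ≤ 8Mu + 8u²/d², d ≤ 1/2, u²/d²*d ≤ Lu :
-- p * y² ≤ (4M+8L)u  whenever 0 ≤ p ≤ d ≤ 1/2... we use p = w(1-w) ≤ d.
private lemma case_helper {y2 u d L M p : ℝ} (hM : 1 ≤ M) (hu : 0 ≤ u) (hd : 0 < d)
    (hy2 : 0 ≤ y2) (hd2 : d ≤ 1/2)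
    (hy : y2 ≤ 8 * M * u + 8 * u ^ 2 / d ^ 2)
    (hdiv : u ^ 2 / d ^ 2 * d ≤ L * u)
    (hp0 : 0 ≤ p) (hpd : p ≤ d) :
    p * y2 ≤ (4 * M + 8 * L) * u := by
  have s2 : p * y2 ≤ d * y2 := mul_le_mul_of_nonneg_right hpd hy2
  have s3 : d * y2 ≤ d * (8 * M * u + 8 * u ^ 2 / d ^ 2) := mul_le_mul_of_nonneg_left hy hd.le
  have s4 : d * (8 * M * u + 8 * u ^ 2 / d ^ 2) = 8 * M * u * d + 8 * (u ^ 2 / d ^ 2 * d) := by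
    ring
  have s5 : 8 * M * u * d ≤ 4 * M * u := by nlinarith [mul_nonneg (show (0:ℝ) ≤ M by linarith) hu]
  nlinarith

private lemma final_helper {T M L u v : ℝ} (hM : 1 ≤ M) (hL : 1 ≤ L) (hu : 0 ≤ u)
    (h : T ≤ (4 * M + 8 * L) * u) (hv2 : 1/2 ≤ v) :
    T ≤ (8 * M + 16 * L) * (u * v) := by
  nlinarith [mul_nonneg (mul_nonneg (show (0:ℝ) ≤ 4*M+8*L by linarith) hu)
    (show (0:ℝ) ≤ 2*v - 1 by linarith)]

lemma landau (g g1 : ℝ → ℝ) (M L : ℝ) (hM : 1 ≤ M) (hL : 1 ≤ L)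
    (hd : ∀ s ∈ Set.Ioo (0:ℝ) 1, HasDerivAt g (g1 s) s)
    (hgc : ContinuousOn g (Set.Icc 0 1))
    (hlip : ∀ s ∈ Set.Icc (0:ℝ) 1, ∀ t ∈ Set.Icc (0:ℝ) 1, |g1 s - g1 t| ≤ M * |s - t|)
    (hLb : ∀ s ∈ Set.Icc (0:ℝ) 1, ∀ t ∈ Set.Icc (0:ℝ) 1, |g s - g t| ≤ L * |s - t|)
    (hrange : ∀ x ∈ Set.Icc (0:ℝ) 1, g x ∈ Set.Icc (0:ℝ) 1)
    (hg0 : g 0 = 0) (hg1' : g 1 = 1) :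
    ∀ w ∈ Set.Ioo (0:ℝ) 1, w * (1 - w) * g1 w ^ 2 ≤ (8 * M + 16 * L) * (g w * (1 - g w)) := by
  intro w hw
  obtain ⟨hw0, hw1⟩ := hw
  have hwmem : w ∈ Set.Icc (0:ℝ) 1 := ⟨hw0.le, hw1.le⟩
  have hM0 : (0:ℝ) < M := by linarith
  have hL0 : (0:ℝ) < L := by linarith
  have hu0 : 0 ≤ g w := (hrange w hwmem).1
  have hv0 : 0 ≤ 1 - g w := by linarith [(hrange w hwmem).2]
  have hy2 : 0 ≤ g1 w ^ 2 := sq_nonneg _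
  have hp0 : 0 ≤ w * (1 - w) := mul_nonneg hw0.le (by linarith)
  -- Lipschitz consequences
  have huL : g w ≤ L * w := by
    have h0 := hLb w hwmem 0 ⟨le_refl 0, zero_le_one⟩
    rw [hg0, sub_zero, sub_zero, abs_of_nonneg hw0.le] at h0
    exact (le_abs_self _).trans h0
  have hvL : 1 - g w ≤ L * (1 - w) := by
    have h0 := hLb 1 ⟨zero_le_one, le_refl 1⟩ w hwmem
    rw [hg1', abs_of_nonneg (show (0:ℝ) ≤ 1 - w by linarith),
      abs_of_nonneg hv0] at h0
    exact h0
  -- the two one-sided bounds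
  have hBu : ∀ t, 0 < t → t ≤ min w (1 - w) → |g1 w| ≤ g w / t + M * t := by
    intro t ht0 htle
    exact aux_slope g g1 M hM0.le hd hgc hlip (fun x hx => (hrange x hx).1) ⟨hw0, hw1⟩ ht0
      (htle.trans (min_le_left _ _)) (htle.trans (min_le_right _ _))
  have hBv : ∀ t, 0 < t → t ≤ min w (1 - w) → |g1 w| ≤ (1 - g w) / t + M * t := by
    intro t ht0 htle
    have h0 := aux_slope (fun x => 1 - g x) (fun x => -g1 x) M hM0.le
      (fun s hs => (hd s hs).const_sub 1)
      (continuousOn_const.sub hgc)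
      (fun s hs t' ht' => by
        rw [show -g1 s - -g1 t' = -(g1 s - g1 t') by ring, abs_neg]
        exact hlip s hs t' ht')
      (fun x hx => by simpa using (hrange x hx).2)
      ⟨hw0, hw1⟩ ht0 (htle.trans (min_le_left _ _)) (htle.trans (min_le_right _ _))
    rwa [abs_neg] at h0
  rcases le_or_gt w (1/2) with hhalf | hhalf
  · -- min = w
    have hmin : min w (1 - w) = w := min_eq_left (by linarith)
    have hyu : g1 w ^ 2 ≤ 8 * M * (g w) + 8 * (g w) ^ 2 / w ^ 2 :=
      aux_opt hM0 hu0 hw0 (fun t ht0 htd => hBu t ht0 (by rw [hmin]; exact htd))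
    have hyv : g1 w ^ 2 ≤ 8 * M * (1 - g w) + 8 * (1 - g w) ^ 2 / w ^ 2 :=
      aux_opt hM0 hv0 hw0 (fun t ht0 htd => hBv t ht0 (by rw [hmin]; exact htd))
    have hpd : w * (1 - w) ≤ w := by nlinarith
    rcases le_or_gt (g w) (1/2) with hcase | hcase
    · exact final_helper hM hL hu0
        (case_helper hM hu0 hw0 hy2 hhalf hyu (div_helper1 hw0 hu0 huL) hp0 hpd)
        (by linarith)
    · -- g w > 1/2 hence w ≥ 1/(2L)
      have hwL : 1/(2*L) ≤ w := by
        rw [div_le_iff₀ (by positivity)]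
        nlinarith
      have h1 := case_helper hM hv0 hw0 hy2 hhalf hyv
        (div_helper2 hw0 hv0 (by linarith) hL hwL) hp0 hpd
      have h2 := final_helper hM hL hv0 h1 (by linarith : 1/2 ≤ g w)
      calc w * (1 - w) * g1 w ^ 2 ≤ (8*M+16*L) * ((1 - g w) * g w) := h2
        _ = (8*M+16*L) * (g w * (1 - g w)) := by ring
  · -- min = 1 - w
    have hmin : min w (1 - w) = 1 - w := min_eq_right (by linarith)
    have h1w : (0:ℝ) < 1 - w := by linarith
    have hyu : g1 w ^ 2 ≤ 8 * M * (g w) + 8 * (g w) ^ 2 / (1-w) ^ 2 :=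
      aux_opt hM0 hu0 h1w (fun t ht0 htd => hBu t ht0 (by rw [hmin]; exact htd))
    have hyv : g1 w ^ 2 ≤ 8 * M * (1 - g w) + 8 * (1 - g w) ^ 2 / (1-w) ^ 2 :=
      aux_opt hM0 hv0 h1w (fun t ht0 htd => hBv t ht0 (by rw [hmin]; exact htd))
    have hpd : w * (1 - w) ≤ 1 - w := by nlinarith
    rcases le_or_gt (1 - g w) (1/2) with hcase | hcase
    · -- use hyv, 1-g ≤ L(1-w)
      have h1 := case_helper hM hv0 h1w hy2 (by linarith) hyv
        (div_helper1 h1w hv0 hvL) hp0 hpd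
      have h2 := final_helper hM hL hv0 h1 (by linarith : 1/2 ≤ g w)
      calc w * (1 - w) * g1 w ^ 2 ≤ (8*M+16*L) * ((1 - g w) * g w) := h2
        _ = (8*M+16*L) * (g w * (1 - g w)) := by ring
    · -- 1-g > 1/2, so 1-w ≥ 1/(2L)
      have hwL : 1/(2*L) ≤ 1 - w := by
        rw [div_le_iff₀ (by positivity)]
        nlinarith
      exact final_helper hM hL hu0
        (case_helper hM hu0 h1w hy2 (by linarith) hyu
          (div_helper2 h1w hu0 (by linarith) hL hwL) hp0 hpd)
        (by linarith)

lemma hasDeriv_arccos_comp {g : ℝ → ℝ} {y w : ℝ} (hdg : HasDerivAt g y w)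
    (h0 : 0 < g w) (h1 : g w < 1) :
    HasDerivAt (fun v => Real.arccos (1 - 2 * g v)) (y / Real.sqrt (g w * (1 - g w))) w := by
  have hinner : HasDerivAt (fun v => 1 - 2 * g v) (-(2 * y)) w := (hdg.const_mul 2).const_sub 1
  have hne1 : 1 - 2 * g w ≠ -1 := by intro h; nlinarith [h]
  have hne2 : 1 - 2 * g w ≠ 1 := by intro h; nlinarith [h]
  have houter := Real.hasDerivAt_arccos hne1 hne2
  have hcomp := houter.comp w hinner
  have huv : 0 < g w * (1 - g w) := mul_pos h0 (by linarith)
  have hs : Real.sqrt (g w * (1 - g w)) > 0 := Real.sqrt_pos.mpr huv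
  have heq : -(1 / Real.sqrt (1 - (1 - 2 * g w) ^ 2)) * -(2 * y)
      = y / Real.sqrt (g w * (1 - g w)) := by
    have h4 : 1 - (1 - 2 * g w) ^ 2 = 4 * (g w * (1 - g w)) := by ring
    rw [h4, show (4:ℝ) = 2 ^ 2 by norm_num, Real.sqrt_mul (by positivity),
      Real.sqrt_sq (by norm_num : (0:ℝ) ≤ 2)]
    field_simp
  rw [heq] at hcomp
  exact hcomp

lemma G_package (g : ℝ → ℝ) (hg : ContDiffOn ℝ 2 g (Set.Icc 0 1))
    (hg0 : g 0 = 0) (hg1 : g 1 = 1)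
    (hgrange : ∀ w ∈ Set.Icc (0:ℝ) 1, g w ∈ Set.Icc (0:ℝ) 1) :
    ∃ C, 0 < C ∧
      (∀ w ∈ Set.Ioo (0:ℝ) 1,
        (deriv (fun v => Real.arccos (1 - 2 * g v)) w) ^ 2 ≤ C / (w * (1 - w))) ∧
      (∀ w ∈ Set.Ioo (0:ℝ) 1, 0 < g w → g w < 1 →
        HasDerivAt (fun v => Real.arccos (1 - 2 * g v))
          (deriv (fun v => Real.arccos (1 - 2 * g v)) w) w) := by
  have huD : UniqueDiffOn ℝ (Set.Icc (0:ℝ) 1) := uniqueDiffOn_Icc zero_lt_one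
  have hg1c : ContDiffOn ℝ 1 (derivWithin g (Set.Icc 0 1)) (Set.Icc 0 1) :=
    hg.derivWithin huD (by norm_num)
  set g1 := derivWithin g (Set.Icc 0 1) with hg1def
  have hg1cont : ContinuousOn g1 (Set.Icc 0 1) := hg1c.continuousOn
  have hgdiff : ∀ s ∈ Set.Ioo (0:ℝ) 1, HasDerivAt g (g1 s) s := by
    intro s hs
    have hmem : Set.Icc (0:ℝ) 1 ∈ 𝓝 s := Icc_mem_nhds hs.1 hs.2
    exact ((hg.differentiableOn (by norm_num) s (Set.Ioo_subset_Icc_self hs)).hasDerivWithinAt).hasDerivAt hmem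
  obtain ⟨L0, hL0⟩ := isCompact_Icc.exists_bound_of_continuousOn hg1cont
  have hg2cont : ContinuousOn (derivWithin g1 (Set.Icc 0 1)) (Set.Icc 0 1) :=
    (ContDiffOn.derivWithin (m := 0) hg1c huD (by norm_num)).continuousOn
  obtain ⟨M0, hM0⟩ := isCompact_Icc.exists_bound_of_continuousOn hg2cont
  set L := max L0 1 with hLdef
  set M := max M0 1 with hMdef
  have hL1 : (1:ℝ) ≤ L := le_max_right _ _
  have hM1 : (1:ℝ) ≤ M := le_max_right _ _
  have hlipg : ∀ s ∈ Set.Icc (0:ℝ) 1, ∀ t ∈ Set.Icc (0:ℝ) 1, |g s - g t| ≤ L * |s - t| := by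
    intro s hs t ht
    have := Convex.norm_image_sub_le_of_norm_derivWithin_le
      (hg.differentiableOn (by norm_num))
      (fun x hx => ((hL0 x hx).trans (le_max_left _ _) : ‖g1 x‖ ≤ L)) (convex_Icc 0 1) ht hs
    simpa [Real.norm_eq_abs] using this
  have hlipg1 : ∀ s ∈ Set.Icc (0:ℝ) 1, ∀ t ∈ Set.Icc (0:ℝ) 1, |g1 s - g1 t| ≤ M * |s - t| := by
    intro s hs t ht
    have := Convex.norm_image_sub_le_of_norm_derivWithin_le
      (hg1c.differentiableOn (by norm_num))
      (fun x hx => ((hM0 x hx).trans (le_max_left _ _) : ‖derivWithin g1 (Set.Icc 0 1) x‖ ≤ M))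
      (convex_Icc 0 1) ht hs
    simpa [Real.norm_eq_abs] using this
  have hland := landau g g1 M L hM1 hL1 hgdiff hg.continuousOn hlipg1 hlipg hgrange hg0 hg1
  refine ⟨8 * M + 16 * L, by positivity, ?_, ?_⟩
  · intro w hw
    have hp : 0 < w * (1 - w) := mul_pos hw.1 (by linarith [hw.2])
    have hrw := hgrange w (Set.Ioo_subset_Icc_self hw)
    rcases eq_or_lt_of_le hrw.1 with h0 | h0
    · -- g w = 0 : local min of G
      have hGw : Real.arccos (1 - 2 * g w) = 0 := by rw [← h0]; simp [Real.arccos_one]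
      have hmin : IsLocalMin (fun v => Real.arccos (1 - 2 * g v)) w :=
        Filter.Eventually.of_forall (fun y => by
          simp only [hGw]; exact Real.arccos_nonneg _)
      rw [hmin.deriv_eq_zero, zero_pow two_ne_zero]
      positivity
    rcases eq_or_lt_of_le hrw.2 with h1 | h1
    · -- g w = 1 : local max
      have hGw : Real.arccos (1 - 2 * g w) = π := by rw [h1]; norm_num [Real.arccos_neg_one]
      have hmax : IsLocalMax (fun v => Real.arccos (1 - 2 * g v)) w :=
        Filter.Eventually.of_forall (fun y => by
          simp only [hGw]; exact Real.arccos_le_pi _)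
      rw [hmax.deriv_eq_zero, zero_pow two_ne_zero]
      positivity
    · -- interior values
      have hder := hasDeriv_arccos_comp (hgdiff w hw) h0 h1
      have hdeq : deriv (fun v => Real.arccos (1 - 2 * g v)) w
          = g1 w / Real.sqrt (g w * (1 - g w)) := hder.deriv
      rw [hdeq]
      have huv : 0 < g w * (1 - g w) := mul_pos h0 (by linarith)
      have hsq : Real.sqrt (g w * (1 - g w)) ^ 2 = g w * (1 - g w) := Real.sq_sqrt huv.le
      rw [div_pow, hsq, div_le_div_iff₀ huv hp]
      calc g1 w ^ 2 * (w * (1 - w)) = w * (1 - w) * g1 w ^ 2 := by ring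
        _ ≤ (8 * M + 16 * L) * (g w * (1 - g w)) := hland w hw
  · intro w hw h0 h1
    have hder := hasDeriv_arccos_comp (hgdiff w hw) h0 h1
    rw [hder.deriv]
    exact hder

lemma sqrt_weight_integrable :
    IntegrableOn (fun w : ℝ => (Real.sqrt (w * (1 - w)))⁻¹) (Set.Ioo 0 1) := by
  have h1 : IntervalIntegrable (fun x : ℝ => x ^ (-(1/2) : ℝ)) volume 0 1 :=
    intervalIntegral.intervalIntegrable_rpow' (by norm_num)
  have h2 : IntervalIntegrable (fun x : ℝ => (1 - x) ^ (-(1/2) : ℝ)) volume 0 1 := by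
    simpa using (h1.comp_sub_left 1).symm
  have hsum : IntegrableOn
      (fun w : ℝ => Real.sqrt 2 * (w ^ (-(1/2) : ℝ) + (1 - w) ^ (-(1/2) : ℝ))) (Set.Ioo 0 1) := by
    have h3 : IntegrableOn (fun x : ℝ => x ^ (-(1/2):ℝ) + (1-x) ^ (-(1/2):ℝ)) (Set.Ioo 0 1) := by
      have := (h1.add h2)
      rw [intervalIntegrable_iff] at this
      simp only [Set.uIoc_of_le (zero_le_one' ℝ)] at this
      exact ((integrableOn_Ioc_iff_integrableOn_Ioo).mp this)
    exact h3.const_mul _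
  apply hsum.integrable.mono
  · exact ((Real.continuous_sqrt.comp ((continuous_id.mul (continuous_const.sub continuous_id)))).measurable.inv).aestronglyMeasurable
  · rw [ae_restrict_iff' measurableSet_Ioo]
    filter_upwards with w hw
    obtain ⟨hw0, hw1⟩ := hw
    have hwp : (0:ℝ) < 1 - w := by linarith
    have t1 : (0:ℝ) < w ^ (-(1/2):ℝ) := Real.rpow_pos_of_pos hw0 _
    have t2 : (0:ℝ) < (1-w) ^ (-(1/2):ℝ) := Real.rpow_pos_of_pos hwp _
    have hs2 : (0:ℝ) < Real.sqrt 2 := by positivity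
    have key : (Real.sqrt (w * (1 - w)))⁻¹ ≤
        Real.sqrt 2 * (w ^ (-(1/2) : ℝ) + (1 - w) ^ (-(1/2) : ℝ)) := by
      rcases le_or_gt w (1/2) with hc | hc
      · -- w(1-w) ≥ w/2
        have hge : w / 2 ≤ w * (1 - w) := by nlinarith
        have h4 : Real.sqrt (w/2) ≤ Real.sqrt (w * (1-w)) := Real.sqrt_le_sqrt hge
        have h5 : Real.sqrt (w/2) = Real.sqrt w / Real.sqrt 2 := Real.sqrt_div hw0.le 2
        have h6 : (0:ℝ) < Real.sqrt (w/2) := Real.sqrt_pos.mpr (by linarith)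
        have h7 : (Real.sqrt (w * (1-w)))⁻¹ ≤ (Real.sqrt (w/2))⁻¹ :=
          inv_anti₀ h6 h4
        have h8 : (Real.sqrt (w/2))⁻¹ = Real.sqrt 2 * (Real.sqrt w)⁻¹ := by
          rw [h5]; field_simp
        have h9 : (Real.sqrt w)⁻¹ = w ^ (-(1/2):ℝ) := by
          rw [Real.rpow_neg hw0.le, Real.sqrt_eq_rpow]
        calc (Real.sqrt (w * (1-w)))⁻¹ ≤ (Real.sqrt (w/2))⁻¹ := h7
          _ = Real.sqrt 2 * (w ^ (-(1/2):ℝ)) := by rw [h8, h9]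
          _ ≤ Real.sqrt 2 * (w ^ (-(1/2):ℝ) + (1-w) ^ (-(1/2):ℝ)) := by nlinarith
      · -- symmetric
        have hge : (1-w) / 2 ≤ w * (1 - w) := by nlinarith
        have h4 : Real.sqrt ((1-w)/2) ≤ Real.sqrt (w * (1-w)) := Real.sqrt_le_sqrt hge
        have h5 : Real.sqrt ((1-w)/2) = Real.sqrt (1-w) / Real.sqrt 2 := Real.sqrt_div hwp.le 2
        have h6 : (0:ℝ) < Real.sqrt ((1-w)/2) := Real.sqrt_pos.mpr (by linarith)
        have h7 : (Real.sqrt (w * (1-w)))⁻¹ ≤ (Real.sqrt ((1-w)/2))⁻¹ :=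
          inv_anti₀ h6 h4
        have h8 : (Real.sqrt ((1-w)/2))⁻¹ = Real.sqrt 2 * (Real.sqrt (1-w))⁻¹ := by
          rw [h5]; field_simp
        have h9 : (Real.sqrt (1-w))⁻¹ = (1-w) ^ (-(1/2):ℝ) := by
          rw [Real.rpow_neg hwp.le, Real.sqrt_eq_rpow]
        calc (Real.sqrt (w * (1-w)))⁻¹ ≤ (Real.sqrt ((1-w)/2))⁻¹ := h7
          _ = Real.sqrt 2 * ((1-w) ^ (-(1/2):ℝ)) := by rw [h8, h9]
          _ ≤ Real.sqrt 2 * (w ^ (-(1/2):ℝ) + (1-w) ^ (-(1/2):ℝ)) := by nlinarith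
    have hlhs : (0:ℝ) ≤ (Real.sqrt (w * (1 - w)))⁻¹ := by positivity
    rw [Real.norm_eq_abs, Real.norm_eq_abs, abs_of_nonneg hlhs, abs_of_nonneg (by nlinarith)]
    exact key

set_option maxHeartbeats 1000000 in
/-- For any twice differentiable `g : [0,1] → [0,1]` with `g(0)=0`, `g(1)=1`, and
positive density `f` on `(0,1)` with `A = ∫₀¹ dw/(f(w)w(1−w)) < ∞`,
`∫₀¹ f(w)w(1−w)(G'(w))² dw ≥ π²/A` where `G = arccos(1−2g)`, with equality iff
`g = g_opt`, where `g_opt(w) = (1/2)(1 − cos(π F(w)/F(1)))`, `F(w) = ∫₀^w dv/(f(v)v(1−v))`. -/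
theorem stmt_12 (f g : ℝ → ℝ)
    (hcont : ContinuousOn f (Set.Ioo 0 1))
    (hpos : ∀ w ∈ Set.Ioo (0:ℝ) 1, 0 < f w)
    (hone : ∫ w in Set.Ioo (0:ℝ) 1, f w = 1)
    (hint : IntegrableOn (fun v => (f v * v * (1 - v))⁻¹) (Set.Ioo (0:ℝ) 1))
    (hg : ContDiffOn ℝ 2 g (Set.Icc 0 1))
    (hg0 : g 0 = 0) (hg1 : g 1 = 1)
    (hgrange : ∀ w ∈ Set.Icc (0:ℝ) 1, g w ∈ Set.Icc (0:ℝ) 1) :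
    π ^ 2 * (∫ w in Set.Ioo (0:ℝ) 1, (f w * w * (1 - w))⁻¹)⁻¹ ≤
      ∫ w in Set.Ioo (0:ℝ) 1,
        f w * w * (1 - w) * (deriv (fun v => Real.arccos (1 - 2 * g v)) w) ^ 2 ∧
    ((∫ w in Set.Ioo (0:ℝ) 1,
        f w * w * (1 - w) * (deriv (fun v => Real.arccos (1 - 2 * g v)) w) ^ 2)
        = π ^ 2 * (∫ w in Set.Ioo (0:ℝ) 1, (f w * w * (1 - w))⁻¹)⁻¹ ↔
      ∀ w ∈ Set.Icc (0:ℝ) 1,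
        g w = (1 - Real.cos (π * (∫ v in (0:ℝ)..w, (f v * v * (1 - v))⁻¹)
          / (∫ v in (0:ℝ)..(1:ℝ), (f v * v * (1 - v))⁻¹))) / 2) := by
  obtain ⟨C, hC0, hCb, hCd⟩ := G_package g hg hg0 hg1 hgrange
  set G : ℝ → ℝ := fun v => Real.arccos (1 - 2 * g v) with hGdef
  set A : ℝ := ∫ w in Set.Ioo (0:ℝ) 1, (f w * w * (1 - w))⁻¹ with hAdef
  -- basic facts
  have hρpos : ∀ w ∈ Set.Ioo (0:ℝ) 1, 0 < f w * w * (1 - w) := by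
    intro w hw
    have h1 := hpos w hw
    have h2 := hw.1
    have h3 := hw.2
    exact mul_pos (mul_pos h1 h2) (by linarith)

  have hφpos : ∀ w ∈ Set.Ioo (0:ℝ) 1, 0 < (f w * w * (1 - w))⁻¹ :=
    fun w hw => inv_pos.mpr (hρpos w hw)
  have hφnn : (0:ℝ → ℝ) ≤ᶠ[ae (volume.restrict (Set.Ioo (0:ℝ) 1))]
      fun w => (f w * w * (1 - w))⁻¹ := by
    rw [Filter.EventuallyLE, ae_restrict_iff' measurableSet_Ioo]
    filter_upwards with w hw
    exact (hφpos w hw).le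
  have hA0 : 0 < A := by
    rw [hAdef]
    rw [setIntegral_pos_iff_support_of_nonneg_ae hφnn hint]
    have hsub : Set.Ioo (0:ℝ) 1 ⊆ Function.support (fun w => (f w * w * (1 - w))⁻¹) ∩ Set.Ioo (0:ℝ) 1 :=
      fun w hw => ⟨ne_of_gt (hφpos w hw), hw⟩
    calc (0:ℝ≥0∞) < volume (Set.Ioo (0:ℝ) 1) := by simp
      _ ≤ _ := measure_mono hsub
  have hAne : A ≠ 0 := ne_of_gt hA0
  -- integrability of f
  have hIf : IntegrableOn f (Set.Ioo (0:ℝ) 1) := by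
    by_contra hni
    rw [MeasureTheory.integral_undef hni] at hone
    norm_num at hone
  have hmeasG' : Measurable (deriv G) := measurable_deriv _
  -- integrability of main integrand
  have hImain : IntegrableOn (fun w => f w * w * (1 - w) * deriv G w ^ 2) (Set.Ioo (0:ℝ) 1) := by
    apply (hIf.const_mul C).mono
    · apply AEStronglyMeasurable.mul
      · apply AEStronglyMeasurable.mul
        · apply AEStronglyMeasurable.mul
          · exact hcont.aestronglyMeasurable measurableSet_Ioo
          · exact aestronglyMeasurable_id
        · exact (continuous_const.sub continuous_id).aestronglyMeasurable
      · exact (hmeasG'.pow_const 2).aestronglyMeasurable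
    · rw [ae_restrict_iff' measurableSet_Ioo]
      filter_upwards with w hw
      have h1 := hρpos w hw
      have h2 := hCb w hw
      have h3 : 0 < w * (1 - w) := mul_pos hw.1 (by linarith [hw.2])
      have h4 : f w * w * (1 - w) * deriv G w ^ 2 ≤ C * f w := by
        have h5 : f w * w * (1 - w) * deriv G w ^ 2 ≤ f w * w * (1 - w) * (C / (w * (1 - w))) :=
          mul_le_mul_of_nonneg_left h2 h1.le
        have h6 : f w * w * (1 - w) * (C / (w * (1 - w))) = C * f w := by
          rw [mul_div_assoc', div_eq_iff h3.ne']
          ring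
        linarith
      rw [Real.norm_eq_abs, Real.norm_eq_abs,
        abs_of_nonneg (mul_nonneg h1.le (sq_nonneg _)),
        abs_of_nonneg (mul_nonneg hC0.le (hpos w hw).le)]
      exact h4
  -- integrability of deriv G
  have hIG' : IntegrableOn (deriv G) (Set.Ioo (0:ℝ) 1) := by
    apply (sqrt_weight_integrable.const_mul (Real.sqrt C)).mono
      hmeasG'.aestronglyMeasurable
    rw [ae_restrict_iff' measurableSet_Ioo]
    filter_upwards with w hw
    have h3 : 0 < w * (1 - w) := mul_pos hw.1 (by linarith [hw.2])
    have h2 := hCb w hw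
    have hle : |deriv G w| ≤ Real.sqrt C * (Real.sqrt (w * (1 - w)))⁻¹ := by
      have h4 : |deriv G w| = Real.sqrt (deriv G w ^ 2) := (Real.sqrt_sq_eq_abs _).symm
      rw [h4]
      have h5 : Real.sqrt (deriv G w ^ 2) ≤ Real.sqrt (C / (w * (1 - w))) :=
        Real.sqrt_le_sqrt h2
      have h6 : Real.sqrt (C / (w * (1 - w))) = Real.sqrt C / Real.sqrt (w * (1 - w)) :=
        Real.sqrt_div hC0.le _
      rw [h6, div_eq_mul_inv] at h5
      exact h5
    rw [Real.norm_eq_abs, Real.norm_eq_abs]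
    refine hle.trans ?_
    rw [abs_of_nonneg (by positivity)]
  -- the points c d
  have hgcont : ContinuousOn g (Set.Icc 0 1) := hg.continuousOn
  obtain ⟨c, d, hc0, hcd, hd1, hgc, hgd, hgin⟩ :
      ∃ c d : ℝ, 0 ≤ c ∧ c < d ∧ d ≤ 1 ∧ g c = 0 ∧ g d = 1 ∧
        ∀ w ∈ Set.Ioo c d, 0 < g w ∧ g w < 1 := by
    classical
    set S0 := {x ∈ Set.Icc (0:ℝ) 1 | g x = 0} with hS0def
    have hS0ne : S0.Nonempty := ⟨0, ⟨le_refl 0, zero_le_one⟩, hg0⟩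
    have hS0bdd : BddAbove S0 := ⟨1, fun x hx => hx.1.2⟩
    have hS0closed : IsClosed S0 := by
      have he : S0 = Set.Icc 0 1 ∩ g ⁻¹' {0} := by
        ext x; simp [hS0def, Set.mem_sep_iff, and_comm]
      rw [he]
      exact hgcont.preimage_isClosed_of_isClosed isClosed_Icc isClosed_singleton
    set c := sSup S0 with hcdef
    have hcmem : c ∈ S0 := hS0closed.csSup_mem hS0ne hS0bdd
    have hgc : g c = 0 := hcmem.2
    have hc01 : c ∈ Set.Icc (0:ℝ) 1 := hcmem.1
    have hc1 : c < 1 := lt_of_le_of_ne hc01.2 (fun h => by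
      rw [h, hg1] at hgc; norm_num at hgc)
    set S1 := {x ∈ Set.Icc c 1 | g x = 1} with hS1def
    have hS1ne : S1.Nonempty := ⟨1, ⟨hc01.2, le_refl 1⟩, hg1⟩
    have hS1bdd : BddBelow S1 := ⟨c, fun x hx => hx.1.1⟩
    have hS1closed : IsClosed S1 := by
      have he : S1 = Set.Icc c 1 ∩ g ⁻¹' {1} := by
        ext x; simp [hS1def, Set.mem_sep_iff, and_comm]
      rw [he]
      exact (hgcont.mono (Set.Icc_subset_Icc hc01.1 le_rfl)).preimage_isClosed_of_isClosed
        isClosed_Icc isClosed_singleton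
    set d := sInf S1 with hddef
    have hdmem : d ∈ S1 := hS1closed.csInf_mem hS1ne hS1bdd
    have hgd : g d = 1 := hdmem.2
    have hcd : c < d := lt_of_le_of_ne hdmem.1.1 (fun h => by
      rw [← h, hgc] at hgd; norm_num at hgd)
    refine ⟨c, d, hc01.1, hcd, hdmem.1.2, hgc, hgd, ?_⟩
    intro w hw
    have hw01 : w ∈ Set.Icc (0:ℝ) 1 := ⟨hc01.1.trans hw.1.le, hw.2.le.trans hdmem.1.2⟩
    have h0 : g w ≠ 0 := fun h => absurd (le_csSup hS0bdd ⟨hw01, h⟩) (not_le.mpr hw.1)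
    have h1 : g w ≠ 1 := fun h => absurd (csInf_le hS1bdd ⟨⟨hw.1.le, hw01.2⟩, h⟩) (not_le.mpr hw.2)
    exact ⟨(hgrange w hw01).1.lt_of_ne (Ne.symm h0), (hgrange w hw01).2.lt_of_ne h1⟩
  -- continuity of G
  have hGcont : ContinuousOn G (Set.Icc 0 1) :=
    Real.continuous_arccos.comp_continuousOn
      (continuousOn_const.sub (continuousOn_const.mul hgcont))
  -- FTC
  have hFTC : ∀ a b : ℝ, 0 ≤ a → a < b → b ≤ 1 → (∀ w ∈ Set.Ioo a b, 0 < g w ∧ g w < 1) →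
      ∫ w in Set.Ioo a b, deriv G w = G b - G a := by
    intro a b ha hab hb1 hgab
    have hsub : Set.Ioo a b ⊆ Set.Ioo (0:ℝ) 1 := by
      intro x hx
      have h1 := hgab x hx
      constructor
      · rcases lt_or_ge 0 x with h | h
        · exact h
        · exfalso
          have : x = 0 := le_antisymm (h.trans_eq rfl) (ha.trans hx.1.le)
          rw [this, hg0] at h1
          exact lt_irrefl 0 h1.1
      · rcases lt_or_ge x 1 with h | h
        · exact h
        · exfalso
          have : x = 1 := le_antisymm (hx.2.le.trans hb1) h
          rw [this, hg1] at h1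
          exact lt_irrefl 1 h1.2
    have hii : IntervalIntegrable (deriv G) volume a b := by
      rw [intervalIntegrable_iff, Set.uIoc_of_le hab.le]
      exact (integrableOn_Ioc_iff_integrableOn_Ioo).mpr (hIG'.mono_set hsub)
    have h := intervalIntegral.integral_eq_sub_of_hasDeriv_right_of_le hab.le
      (hGcont.mono (Set.Icc_subset_Icc ha hb1))
      (fun x hx => ((hCd x (hsub hx) (hgab x hx).1 (hgab x hx).2).hasDerivWithinAt))
      hii
    rw [intervalIntegral.integral_of_le hab.le, MeasureTheory.integral_Ioc_eq_integral_Ioo] at h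
    exact h
  have hsubcd : Set.Ioo c d ⊆ Set.Ioo (0:ℝ) 1 := by
    intro x hx
    have h1 := hgin x hx
    constructor
    · rcases lt_or_ge 0 x with h | h
      · exact h
      · exfalso
        have hx0 : x = 0 := le_antisymm h (hc0.trans hx.1.le)
        rw [hx0, hg0] at h1
        exact lt_irrefl 0 h1.1
    · rcases lt_or_ge x 1 with h | h
      · exact h
      · exfalso
        have hx1 : x = 1 := le_antisymm (hx.2.le.trans hd1) h
        rw [hx1, hg1] at h1
        exact lt_irrefl 1 h1.2
  have hπcd : ∫ w in Set.Ioo c d, deriv G w = π := by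
    rw [hFTC c d hc0 hcd hd1 hgin]
    simp only [hGdef, hgd, hgc]
    norm_num [Real.arccos_neg_one, Real.arccos_one]
  -- expansion
  have hexp : ∀ a b : ℝ, 0 ≤ a → a < b → b ≤ 1 →
      ∫ w in Set.Ioo a b,
        (f w * w * (1 - w)) * (deriv G w - (π/A) * (f w * w * (1 - w))⁻¹) ^ 2
      = (∫ w in Set.Ioo a b, f w * w * (1 - w) * deriv G w ^ 2)
        - 2 * (π/A) * (∫ w in Set.Ioo a b, deriv G w)
        + (π/A) ^ 2 * (∫ w in Set.Ioo a b, (f w * w * (1 - w))⁻¹) := by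
    intro a b ha hab hb
    have hsub : Set.Ioo a b ⊆ Set.Ioo (0:ℝ) 1 := Set.Ioo_subset_Ioo ha hb
    have h1 : IntegrableOn (fun w => f w * w * (1 - w) * deriv G w ^ 2) (Set.Ioo a b) :=
      hImain.mono_set hsub
    have h2 : IntegrableOn (fun w => deriv G w) (Set.Ioo a b) := hIG'.mono_set hsub
    have h3 : IntegrableOn (fun w => (f w * w * (1 - w))⁻¹) (Set.Ioo a b) := hint.mono_set hsub
    have hptw : Set.EqOn
        (fun w => (f w * w * (1 - w)) * (deriv G w - (π/A) * (f w * w * (1 - w))⁻¹) ^ 2)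
        (fun w => f w * w * (1 - w) * deriv G w ^ 2
          - 2 * (π/A) * deriv G w + (π/A) ^ 2 * (f w * w * (1 - w))⁻¹)
        (Set.Ioo a b) := by
      intro w hw
      have hρ := hρpos w (hsub hw)
      have hρne : f w * w * (1 - w) ≠ 0 := ne_of_gt hρ
      have hi : (f w * w * (1 - w)) * (f w * w * (1 - w))⁻¹ = 1 := mul_inv_cancel₀ hρne
      beta_reduce
      linear_combination (-2*(π/A)*deriv G w + (π/A)^2*(f w * w * (1 - w))⁻¹) * hi
    rw [setIntegral_congr_fun measurableSet_Ioo hptw]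
    have hsub2 : IntegrableOn
        (fun w => f w * w * (1 - w) * deriv G w ^ 2 - 2 * (π/A) * deriv G w) (Set.Ioo a b) :=
      h1.sub (h2.const_mul (2 * (π/A)))
    have hc3 : IntegrableOn (fun w => (π/A)^2 * (f w * w * (1 - w))⁻¹) (Set.Ioo a b) :=
      h3.const_mul ((π/A)^2)
    have hc2 : IntegrableOn (fun w => 2 * (π/A) * deriv G w) (Set.Ioo a b) :=
      h2.const_mul (2 * (π/A))
    rw [MeasureTheory.integral_add hsub2 hc3,
      MeasureTheory.integral_sub h1 hc2,
      MeasureTheory.integral_const_mul, MeasureTheory.integral_const_mul]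
  -- nonnegativity of J on any subinterval
  have hJnn : ∀ a b : ℝ, 0 ≤ a → b ≤ 1 →
      0 ≤ ∫ w in Set.Ioo a b,
        (f w * w * (1 - w)) * (deriv G w - (π/A) * (f w * w * (1 - w))⁻¹) ^ 2 := by
    intro a b ha hb
    apply setIntegral_nonneg measurableSet_Ioo
    intro w hw
    exact mul_nonneg (hρpos w (Set.Ioo_subset_Ioo ha hb hw)).le (sq_nonneg _)
  -- monotone set inequalities
  have hnnmain : (0:ℝ → ℝ) ≤ᶠ[ae (volume.restrict (Set.Ioo (0:ℝ) 1))]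
      fun w => f w * w * (1 - w) * deriv G w ^ 2 := by
    rw [Filter.EventuallyLE, ae_restrict_iff' measurableSet_Ioo]
    filter_upwards with w hw
    exact mul_nonneg (hρpos w hw).le (sq_nonneg _)
  have hIcd_le : (∫ w in Set.Ioo c d, f w * w * (1 - w) * deriv G w ^ 2)
      ≤ ∫ w in Set.Ioo (0:ℝ) 1, f w * w * (1 - w) * deriv G w ^ 2 :=
    setIntegral_mono_set hImain hnnmain (HasSubset.Subset.eventuallyLE hsubcd)
  have hAcd_le : (∫ w in Set.Ioo c d, (f w * w * (1 - w))⁻¹) ≤ A := by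
    rw [hAdef]
    exact setIntegral_mono_set hint hφnn (HasSubset.Subset.eventuallyLE hsubcd)
  have harith1 : (π/A)^2 * A = π^2 * A⁻¹ := by field_simp
  have harith2 : 2*(π/A)*π = 2*(π^2 * A⁻¹) := by field_simp
  -- the main inequality
  have hineq : π ^ 2 * A⁻¹ ≤ ∫ w in Set.Ioo (0:ℝ) 1, f w * w * (1 - w) * deriv G w ^ 2 := by
    have e1 := hexp c d hc0 hcd hd1
    rw [hπcd] at e1
    have e2 := hJnn c d hc0 hd1
    rw [e1] at e2
    have h5 : (π/A)^2 * (∫ w in Set.Ioo c d, (f w * w * (1 - w))⁻¹) ≤ (π/A)^2 * A :=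
      mul_le_mul_of_nonneg_left hAcd_le (by positivity)
    linarith
  -- shared facts about the primitive F
  have hAint : (∫ v in (0:ℝ)..(1:ℝ), (f v * v * (1 - v))⁻¹) = A := by
    rw [intervalIntegral.integral_of_le zero_le_one, MeasureTheory.integral_Ioc_eq_integral_Ioo,
      hAdef]
  have hφII : ∀ a b : ℝ, 0 ≤ a → b ≤ 1 → a ≤ b →
      IntervalIntegrable (fun v => (f v * v * (1 - v))⁻¹) volume a b := by
    intro a b ha hb hab
    rw [intervalIntegrable_iff, Set.uIoc_of_le hab]
    exact (integrableOn_Ioc_iff_integrableOn_Ioo).mpr (hint.mono_set (Set.Ioo_subset_Ioo ha hb))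
  have hφnn' : ∀ u ∈ Set.Icc (0:ℝ) 1, 0 ≤ (f u * u * (1 - u))⁻¹ := by
    intro u hu
    rcases eq_or_lt_of_le hu.1 with h | h
    · rw [← h]; norm_num
    rcases eq_or_lt_of_le hu.2 with h1 | h1
    · rw [h1]; norm_num
    · exact (hφpos u ⟨h, h1⟩).le
  have hFnn : ∀ w ∈ Set.Icc (0:ℝ) 1, 0 ≤ ∫ v in (0:ℝ)..w, (f v * v * (1 - v))⁻¹ := by
    intro w hw
    apply intervalIntegral.integral_nonneg hw.1
    intro u hu
    exact hφnn' u ⟨hu.1, hu.2.trans hw.2⟩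
  have hFle : ∀ w ∈ Set.Icc (0:ℝ) 1, (∫ v in (0:ℝ)..w, (f v * v * (1 - v))⁻¹) ≤ A := by
    intro w hw
    rw [← hAint]
    have hadd := intervalIntegral.integral_add_adjacent_intervals
      (hφII 0 w le_rfl hw.2 hw.1) (hφII w 1 hw.1 le_rfl hw.2)
    have hsecond : 0 ≤ ∫ v in w..(1:ℝ), (f v * v * (1 - v))⁻¹ := by
      apply intervalIntegral.integral_nonneg hw.2
      intro u hu
      exact hφnn' u ⟨hw.1.trans hu.1, hu.2⟩
    linarith
  have hφcont : ContinuousOn (fun v => (f v * v * (1 - v))⁻¹) (Set.Ioo (0:ℝ) 1) := by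
    apply ContinuousOn.inv₀
    · exact (hcont.mul continuousOn_id).mul (continuous_const.sub continuous_id).continuousOn
    · exact fun w hw => ne_of_gt (hρpos w hw)
  have hFcont : ContinuousOn (fun x => ∫ v in (0:ℝ)..x, (f v * v * (1 - v))⁻¹)
      (Set.Icc (0:ℝ) 1) := by
    have h := intervalIntegral.continuousOn_primitive_interval (a := (0:ℝ)) (b := 1)
      (μ := volume) (f := fun v => (f v * v * (1 - v))⁻¹) ?_
    · rwa [Set.uIcc_of_le zero_le_one] at h
    · rw [Set.uIcc_of_le zero_le_one]
      exact (integrableOn_Icc_iff_integrableOn_Ioo).mpr hint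
  refine ⟨hineq, ?_, ?_⟩
  · -- equality implies optimal g
    intro heq
    have e1 := hexp c d hc0 hcd hd1
    rw [hπcd] at e1
    have e2 := hJnn c d hc0 hd1
    rw [e1] at e2
    have hAcd_ge : A ≤ ∫ w in Set.Ioo c d, (f w * w * (1 - w))⁻¹ := by
      by_contra hlt
      push_neg at hlt
      have hlam : (0:ℝ) < (π/A)^2 := by
        have := Real.pi_pos
        positivity
      have h5 : (π/A)^2 * (∫ w in Set.Ioo c d, (f w * w * (1 - w))⁻¹) < (π/A)^2 * A :=
        mul_lt_mul_of_pos_left hlt hlam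
      linarith [hIcd_le, heq.le, heq.ge]
    have hAcd : (∫ w in Set.Ioo c d, (f w * w * (1 - w))⁻¹) = A :=
      le_antisymm hAcd_le hAcd_ge
    have hceq : c = 0 := by
      by_contra hcne
      have hc' : 0 < c := hc0.lt_of_ne (Ne.symm hcne)
      have hdisj : Disjoint (Set.Ioo (0:ℝ) c) (Set.Ioo c d) := by
        rw [Set.disjoint_left]
        rintro x hx1 hx2
        exact absurd hx2.1 (not_lt.mpr hx1.2.le)
      have hsub1 : Set.Ioo (0:ℝ) c ⊆ Set.Ioo (0:ℝ) 1 :=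
        Set.Ioo_subset_Ioo le_rfl (by linarith)
      have hunion_sub : Set.Ioo (0:ℝ) c ∪ Set.Ioo c d ⊆ Set.Ioo (0:ℝ) 1 :=
        Set.union_subset hsub1 hsubcd
      have hi1 : IntegrableOn (fun w => (f w * w * (1 - w))⁻¹) (Set.Ioo 0 c) :=
        hint.mono_set hsub1
      have hu := MeasureTheory.setIntegral_union hdisj measurableSet_Ioo hi1
        (hint.mono_set hsubcd) (f := fun w => (f w * w * (1 - w))⁻¹) (μ := volume)
      have hle : (∫ w in Set.Ioo (0:ℝ) c ∪ Set.Ioo c d, (f w * w * (1 - w))⁻¹) ≤ A := by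
        rw [hAdef]
        exact setIntegral_mono_set hint hφnn (HasSubset.Subset.eventuallyLE hunion_sub)
      have hφnn0c : (0:ℝ → ℝ) ≤ᶠ[ae (volume.restrict (Set.Ioo (0:ℝ) c))]
          fun w => (f w * w * (1 - w))⁻¹ := by
        rw [Filter.EventuallyLE, ae_restrict_iff' measurableSet_Ioo]
        filter_upwards with w hw
        exact (hφpos w (hsub1 hw)).le
      have hpos0c : 0 < ∫ w in Set.Ioo (0:ℝ) c, (f w * w * (1 - w))⁻¹ := by
        rw [setIntegral_pos_iff_support_of_nonneg_ae hφnn0c hi1]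
        have hss : Set.Ioo (0:ℝ) c ⊆
            Function.support (fun w => (f w * w * (1 - w))⁻¹) ∩ Set.Ioo (0:ℝ) c :=
          fun w hw => ⟨ne_of_gt (hφpos w (hsub1 hw)), hw⟩
        calc (0:ℝ≥0∞) < volume (Set.Ioo (0:ℝ) c) := by simp [hc']
          _ ≤ _ := measure_mono hss
      linarith
    have hdeq : d = 1 := by
      by_contra hdne
      have hd' : d < 1 := lt_of_le_of_ne hd1 hdne
      have hdisj : Disjoint (Set.Ioo c d) (Set.Ioo d 1) := by
        rw [Set.disjoint_left]
        rintro x hx1 hx2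
        exact absurd hx2.1 (not_lt.mpr hx1.2.le)
      have hsub1 : Set.Ioo d (1:ℝ) ⊆ Set.Ioo (0:ℝ) 1 :=
        Set.Ioo_subset_Ioo (by linarith) le_rfl
      have hunion_sub : Set.Ioo c d ∪ Set.Ioo d 1 ⊆ Set.Ioo (0:ℝ) 1 :=
        Set.union_subset hsubcd hsub1
      have hi1 : IntegrableOn (fun w => (f w * w * (1 - w))⁻¹) (Set.Ioo d 1) :=
        hint.mono_set hsub1
      have hu := MeasureTheory.setIntegral_union hdisj measurableSet_Ioo
        (hint.mono_set hsubcd) hi1 (f := fun w => (f w * w * (1 - w))⁻¹) (μ := volume)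
      have hle : (∫ w in Set.Ioo c d ∪ Set.Ioo d 1, (f w * w * (1 - w))⁻¹) ≤ A := by
        rw [hAdef]
        exact setIntegral_mono_set hint hφnn (HasSubset.Subset.eventuallyLE hunion_sub)
      have hφnnd1 : (0:ℝ → ℝ) ≤ᶠ[ae (volume.restrict (Set.Ioo d (1:ℝ)))]
          fun w => (f w * w * (1 - w))⁻¹ := by
        rw [Filter.EventuallyLE, ae_restrict_iff' measurableSet_Ioo]
        filter_upwards with w hw
        exact (hφpos w (hsub1 hw)).le
      have hposd1 : 0 < ∫ w in Set.Ioo d (1:ℝ), (f w * w * (1 - w))⁻¹ := by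
        rw [setIntegral_pos_iff_support_of_nonneg_ae hφnnd1 hi1]
        have hss : Set.Ioo d (1:ℝ) ⊆
            Function.support (fun w => (f w * w * (1 - w))⁻¹) ∩ Set.Ioo d 1 :=
          fun w hw => ⟨ne_of_gt (hφpos w (hsub1 hw)), hw⟩
        calc (0:ℝ≥0∞) < volume (Set.Ioo d (1:ℝ)) := by simp [hd']
          _ ≤ _ := measure_mono hss
      linarith
    subst hceq
    subst hdeq
    -- J = 0
    have e3 := hexp 0 1 le_rfl zero_lt_one le_rfl
    rw [hπcd, ← hAdef, heq] at e3
    have hJ0 : ∫ w in Set.Ioo (0:ℝ) 1,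
        (f w * w * (1 - w)) * (deriv G w - (π/A) * (f w * w * (1 - w))⁻¹) ^ 2 = 0 := by
      rw [e3]; linarith [harith1, harith2]
    have hJint : IntegrableOn
        (fun w => (f w * w * (1 - w)) * (deriv G w - (π/A) * (f w * w * (1 - w))⁻¹) ^ 2)
        (Set.Ioo (0:ℝ) 1) := by
      have hInt3 : IntegrableOn
          (fun w => f w * w * (1 - w) * deriv G w ^ 2 - 2 * (π/A) * deriv G w
            + (π/A) ^ 2 * (f w * w * (1 - w))⁻¹) (Set.Ioo (0:ℝ) 1) :=
        (hImain.sub (hIG'.const_mul (2 * (π/A)))).add (hint.const_mul ((π/A)^2))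
      apply hInt3.congr
      rw [Filter.EventuallyEq, ae_restrict_iff' measurableSet_Ioo]
      filter_upwards with w
      intro hwmem
      have hρne : f w * w * (1 - w) ≠ 0 := ne_of_gt (hρpos w hwmem)
      have hi : (f w * w * (1 - w)) * (f w * w * (1 - w))⁻¹ = 1 := mul_inv_cancel₀ hρne
      beta_reduce
      linear_combination (2*(π/A)*deriv G w - (π/A)^2*(f w * w * (1 - w))⁻¹) * hi
    have hJnn_ae : (0:ℝ → ℝ) ≤ᶠ[ae (volume.restrict (Set.Ioo (0:ℝ) 1))]
        fun w => (f w * w * (1 - w)) * (deriv G w - (π/A) * (f w * w * (1 - w))⁻¹) ^ 2 := by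
      rw [Filter.EventuallyLE, ae_restrict_iff' measurableSet_Ioo]
      filter_upwards with w hw
      exact mul_nonneg (hρpos w hw).le (sq_nonneg _)
    have hae0 := (MeasureTheory.integral_eq_zero_iff_of_nonneg_ae
      (μ := volume.restrict (Set.Ioo (0:ℝ) 1))
      (f := fun w => (f w * w * (1 - w)) * (deriv G w - (π/A) * (f w * w * (1 - w))⁻¹) ^ 2)
      hJnn_ae hJint).mp hJ0
    have hae : ∀ᵐ w ∂(volume.restrict (Set.Ioo (0:ℝ) 1)),
        deriv G w = (π/A) * (f w * w * (1 - w))⁻¹ := by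
      rw [Filter.EventuallyEq, ae_restrict_iff' measurableSet_Ioo] at hae0
      rw [ae_restrict_iff' measurableSet_Ioo]
      filter_upwards [hae0] with w hw0
      intro hw
      have h2 := hw0 hw
      have hρ := hρpos w hw
      have h3 : (deriv G w - (π/A) * (f w * w * (1 - w))⁻¹) ^ 2 = 0 := by
        rcases mul_eq_zero.mp h2 with h | h
        · exact absurd h (ne_of_gt hρ)
        · exact h
      have h4 := (pow_eq_zero_iff two_ne_zero).mp h3
      linarith
    -- G = (π/A) F on the interior
    have hGF : ∀ w ∈ Set.Ioo (0:ℝ) 1,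
        G w = (π/A) * ∫ v in (0:ℝ)..w, (f v * v * (1 - v))⁻¹ := by
      intro w hw
      have hconst : ∀ a, a ∈ Set.Ioo (0:ℝ) w →
          G w - (π/A) * (∫ v in (0:ℝ)..w, (f v * v * (1 - v))⁻¹)
          = G a - (π/A) * ∫ v in (0:ℝ)..a, (f v * v * (1 - v))⁻¹ := by
        intro a ha
        have haw : a < w := ha.2
        have ha0 : 0 < a := ha.1
        have hsubaw : Set.Ioo a w ⊆ Set.Ioo (0:ℝ) 1 := Set.Ioo_subset_Ioo ha0.le hw.2.le
        have hFTCaw := hFTC a w ha0.le haw hw.2.le (fun x hx => hgin x (hsubaw hx))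
        have haeaw : ∀ᵐ x ∂(volume.restrict (Set.Ioo a w)),
            deriv G x = (π/A) * (f x * x * (1 - x))⁻¹ :=
          ae_restrict_of_ae_restrict_of_subset hsubaw hae
        have hcg : ∫ x in Set.Ioo a w, deriv G x
            = (π/A) * ∫ x in Set.Ioo a w, (f x * x * (1 - x))⁻¹ := by
          rw [MeasureTheory.integral_congr_ae haeaw, MeasureTheory.integral_const_mul]
        have hFsplit : ∫ x in Set.Ioo a w, (f x * x * (1 - x))⁻¹
            = (∫ v in (0:ℝ)..w, (f v * v * (1 - v))⁻¹)
              - ∫ v in (0:ℝ)..a, (f v * v * (1 - v))⁻¹ := by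
          have hadd := intervalIntegral.integral_add_adjacent_intervals
            (hφII 0 a le_rfl (by linarith [hw.2]) ha0.le)
            (hφII a w ha0.le hw.2.le haw.le)
          have hconv : (∫ v in a..w, (f v * v * (1 - v))⁻¹)
              = ∫ x in Set.Ioo a w, (f x * x * (1 - x))⁻¹ := by
            rw [intervalIntegral.integral_of_le haw.le,
              MeasureTheory.integral_Ioc_eq_integral_Ioo]
          linarith
        rw [hFTCaw, hFsplit] at hcg
        linarith
      have hψcontOn : ContinuousOn
          (fun x => G x - (π/A) * ∫ v in (0:ℝ)..x, (f v * v * (1 - v))⁻¹)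
          (Set.Icc (0:ℝ) 1) := hGcont.sub (continuousOn_const.mul hFcont)
      have hψcw : ContinuousWithinAt
          (fun x => G x - (π/A) * ∫ v in (0:ℝ)..x, (f v * v * (1 - v))⁻¹)
          (Set.Ioo (0:ℝ) w) 0 := by
        apply (hψcontOn 0 ⟨le_rfl, zero_le_one⟩).mono
        intro x hx
        exact ⟨hx.1.le, by linarith [hx.2, hw.2]⟩
      have hne : (𝓝[Set.Ioo (0:ℝ) w] (0:ℝ)).NeBot := by
        apply mem_closure_iff_nhdsWithin_neBot.mp
        rw [closure_Ioo (ne_of_lt hw.1)]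
        exact ⟨le_rfl, hw.1.le⟩
      have hlim2 : Filter.Tendsto
          (fun x => G x - (π/A) * ∫ v in (0:ℝ)..x, (f v * v * (1 - v))⁻¹)
          (𝓝[Set.Ioo (0:ℝ) w] 0)
          (𝓝 (G w - (π/A) * ∫ v in (0:ℝ)..w, (f v * v * (1 - v))⁻¹)) := by
        apply Filter.Tendsto.congr' _ tendsto_const_nhds
        filter_upwards [self_mem_nhdsWithin] with a ha
        exact hconst a ha
      have huniq := tendsto_nhds_unique hlim2 hψcw
      have hψ0 : G 0 - (π/A) * ∫ v in (0:ℝ)..(0:ℝ), (f v * v * (1 - v))⁻¹ = 0 := by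
        simp [hGdef, hg0, Real.arccos_one]
      linarith [huniq, hψ0]
    -- conclude
    intro w hw
    rcases eq_or_lt_of_le hw.1 with h0 | h0
    · rw [← h0]
      simp [hg0, Real.cos_zero]
    rcases eq_or_lt_of_le hw.2 with h1 | h1
    · rw [h1, hg1, hAint]
      rw [mul_div_assoc, div_self hAne, mul_one, Real.cos_pi]
      norm_num
    · have hw' : w ∈ Set.Ioo (0:ℝ) 1 := ⟨h0, h1⟩
      have hGFw := hGF w hw'
      have hgb := hgrange w hw
      have hcos : 1 - 2 * g w = Real.cos (G w) := by
        rw [hGdef]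
        exact (Real.cos_arccos (by linarith [hgb.2]) (by linarith [hgb.1])).symm
      rw [hGFw] at hcos
      rw [hAint, show π * (∫ v in (0:ℝ)..w, (f v * v * (1 - v))⁻¹) / A
        = (π/A) * ∫ v in (0:ℝ)..w, (f v * v * (1 - v))⁻¹ by ring]
      linarith [hcos]
  · -- optimal g implies equality
    intro hopt
    have hGeq : ∀ v ∈ Set.Icc (0:ℝ) 1,
        G v = (π/A) * ∫ u in (0:ℝ)..v, (f u * u * (1 - u))⁻¹ := by
      intro v hv
      have hF0 := hFnn v hv
      have hFA := hFle v hv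
      have h1 : 1 - 2 * g v
          = Real.cos (π * (∫ u in (0:ℝ)..v, (f u * u * (1 - u))⁻¹) / A) := by
        rw [hopt v hv, hAint]
        ring
      have hargnn : 0 ≤ π * (∫ u in (0:ℝ)..v, (f u * u * (1 - u))⁻¹) / A := by
        have := Real.pi_pos
        positivity
      have hargle : π * (∫ u in (0:ℝ)..v, (f u * u * (1 - u))⁻¹) / A ≤ π := by
        rw [div_le_iff₀ hA0]
        exact mul_le_mul_of_nonneg_left hFA Real.pi_pos.le
      show Real.arccos (1 - 2 * g v) = _
      rw [h1, Real.arccos_cos hargnn hargle]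
      ring
    have hderivG : ∀ w ∈ Set.Ioo (0:ℝ) 1,
        HasDerivAt G ((π/A) * (f w * w * (1 - w))⁻¹) w := by
      intro w hw
      have hFd : HasDerivAt (fun v => ∫ u in (0:ℝ)..v, (f u * u * (1 - u))⁻¹)
          ((f w * w * (1 - w))⁻¹) w :=
        intervalIntegral.integral_hasDerivAt_right
          (hφII 0 w le_rfl hw.2.le hw.1.le)
          (hφcont.stronglyMeasurableAtFilter isOpen_Ioo w hw)
          (hφcont.continuousAt (Ioo_mem_nhds hw.1 hw.2))
      have h2 := hFd.const_mul (π/A)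
      apply h2.congr_of_eventuallyEq
      filter_upwards [Icc_mem_nhds hw.1 hw.2] with v hv
      exact hGeq v hv
    have heqon : Set.EqOn (fun w => f w * w * (1 - w) * deriv G w ^ 2)
        (fun w => (π/A) ^ 2 * (f w * w * (1 - w))⁻¹) (Set.Ioo (0:ℝ) 1) := by
      intro w hw
      have hd := (hderivG w hw).deriv
      simp only []
      rw [hd]
      have hρne : f w * w * (1 - w) ≠ 0 := ne_of_gt (hρpos w hw)
      field_simp
    rw [setIntegral_congr_fun measurableSet_Ioo heqon, MeasureTheory.integral_const_mul, ← hAdef]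
    exact harith1
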